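/- arXiv:2309.08967 — 3 statements merged into one kernel-verified Lean document; each statement's English description precedes it below -/
import Mathlib

section
/- Let μ₀, ρ be probability measures on ℝ with finite second moment, and let α, b ∈ (0,1) with b + α ≤ 1 and α > 0. Set η = b/(1-α). Define μ_k = ((η + α^k(1-η))·id)_♯μ₀ ∗ ((1-α^k)(1-η)·id)_♯ρ and μ_∞ = (η·id)_♯μ₀ ∗ ((1-η)·id)_♯ρ. Then W₂(μ_k, μ_∞) ≤ α^k (1-η) [ (∫ x² dμ₀)^{1/2} + (∫ x² dρ)^{1/2} ], and in particular μ_k converges weakly in the 2-Wasserstein space to μ_∞ at an exponential rate. -/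
open MeasureTheory ProbabilityTheory ENNReal Filter Topology

/-- The 2-Wasserstein distance between two measures on `ℝ`, as the infimum over all
couplings `γ` of `μ` and `ν` of `(∫ |x - y|² dγ)^(1/2)`, valued in `ℝ≥0∞`. -/
noncomputable def W2 (μ ν : Measure ℝ) : ℝ≥0∞ :=
  ⨅ γ ∈ {γ : Measure (ℝ × ℝ) |
      γ.map Prod.fst = μ ∧ γ.map Prod.snd = ν},
    (∫⁻ p : ℝ × ℝ, ENNReal.ofReal ((p.1 - p.2) ^ 2) ∂γ) ^ (1 / 2 : ℝ)


lemma aux_ofReal_sq (r : ℝ) : ENNReal.ofReal (r ^ 2) = (‖r‖₊ : ℝ≥0∞) ^ (2 : ℝ) := by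
  rw [← sq_abs, ← Real.norm_eq_abs, ENNReal.ofReal_pow (norm_nonneg r),
    ofReal_norm, enorm_eq_nnnorm, show ((2:ℝ)) = ((2:ℕ):ℝ) by norm_num, ENNReal.rpow_natCast]

lemma aux_eLpNorm (ν : Measure ℝ) (hν : Integrable (fun x => x ^ 2) ν)
    (τ : Measure (ℝ × ℝ)) (f : ℝ × ℝ → ℝ) (hf : Measurable f)
    (hτ : τ.map f = ν) :
    eLpNorm f 2 τ = ENNReal.ofReal (Real.sqrt (∫ x, x ^ 2 ∂ν)) := by
  have hI : 0 ≤ ∫ x, x ^ 2 ∂ν := integral_nonneg fun x => sq_nonneg x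
  have hmeas : Measurable (fun x : ℝ => (‖x‖₊ : ℝ≥0∞) ^ (2:ℝ)) := by fun_prop
  rw [eLpNorm_eq_lintegral_rpow_enorm_toReal two_ne_zero ENNReal.ofNat_ne_top,
    show ((2:ℝ≥0∞)).toReal = (2:ℝ) by simp]
  simp only [enorm_eq_nnnorm]
  have h1 : (∫⁻ p, (‖f p‖₊ : ℝ≥0∞) ^ (2:ℝ) ∂τ) = ∫⁻ x, (‖x‖₊ : ℝ≥0∞) ^ (2:ℝ) ∂ν := by
    rw [← hτ, lintegral_map hmeas hf]
  have h3 : (∫⁻ x, (‖x‖₊ : ℝ≥0∞) ^ (2:ℝ) ∂ν) = ENNReal.ofReal (∫ x, x ^ 2 ∂ν) := by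
    rw [ofReal_integral_eq_lintegral_ofReal hν (Filter.Eventually.of_forall fun x => sq_nonneg x)]
    simp_rw [aux_ofReal_sq]
  rw [h1, h3, ENNReal.ofReal_rpow_of_nonneg hI (by norm_num), Real.sqrt_eq_rpow]

theorem stmt_6 (μ₀ ρ : Measure ℝ) [IsProbabilityMeasure μ₀] [IsProbabilityMeasure ρ]
    (hμ₀ : Integrable (fun x => x ^ 2) μ₀) (hρ : Integrable (fun x => x ^ 2) ρ)
    (α b : ℝ) (hα : α ∈ Set.Ioo (0 : ℝ) 1) (hb : b ∈ Set.Ioo (0 : ℝ) 1)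
    (hba : b + α ≤ 1) (η : ℝ) (hη : η = b / (1 - α))
    (μ : ℕ → Measure ℝ)
    (hμ : ∀ k, μ k = (μ₀.map (fun x => (η + α ^ k * (1 - η)) * x)).conv
        (ρ.map (fun x => (1 - α ^ k) * (1 - η) * x)))
    (μlim : Measure ℝ)
    (hmulim : μlim = (μ₀.map (fun x => η * x)).conv (ρ.map (fun x => (1 - η) * x))) :
    (∀ k, W2 (μ k) μlim ≤
      ENNReal.ofReal (α ^ k * (1 - η) *
        (Real.sqrt (∫ x, x ^ 2 ∂μ₀) + Real.sqrt (∫ x, x ^ 2 ∂ρ)))) ∧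
    Tendsto (fun k => W2 (μ k) μlim) atTop (𝓝 0) := by
  obtain ⟨hα0, hα1⟩ := hα
  obtain ⟨hb0, hb1⟩ := hb
  have h1α : (0:ℝ) < 1 - α := by linarith
  have hη1 : η ≤ 1 := by rw [hη, div_le_one h1α]; linarith
  have hαk : ∀ k : ℕ, 0 ≤ α ^ k * (1 - η) := fun k =>
    mul_nonneg (pow_nonneg hα0.le k) (by linarith)
  set S := Real.sqrt (∫ x, x ^ 2 ∂μ₀) + Real.sqrt (∫ x, x ^ 2 ∂ρ) with hS
  have hS0 : 0 ≤ S := add_nonneg (Real.sqrt_nonneg _) (Real.sqrt_nonneg _)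
  have key : ∀ k, W2 (μ k) μlim ≤ ENNReal.ofReal (α ^ k * (1 - η) * S) := by
    intro k
    set a : ℝ := η + α ^ k * (1 - η) with ha
    set c : ℝ := (1 - α ^ k) * (1 - η) with hc
    set K : ℝ := α ^ k * (1 - η) with hK
    set T : ℝ × ℝ → ℝ × ℝ :=
      fun p => (a * p.1 + c * p.2, η * p.1 + (1 - η) * p.2) with hT
    have hTm : Measurable T := by fun_prop
    set γ : Measure (ℝ × ℝ) := (μ₀.prod ρ).map T with hγ
    have hfst : γ.map Prod.fst = μ k := by
      rw [hγ, hμ k, Measure.conv,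
        Measure.map_prod_map _ _ (by fun_prop) (by fun_prop),
        Measure.map_map (by fun_prop) (by fun_prop),
        Measure.map_map (by fun_prop) (by fun_prop)]
      rfl
    have hsnd : γ.map Prod.snd = μlim := by
      rw [hγ, hmulim, Measure.conv,
        Measure.map_prod_map _ _ (by fun_prop) (by fun_prop),
        Measure.map_map (by fun_prop) (by fun_prop),
        Measure.map_map (by fun_prop) (by fun_prop)]
      rfl
    have hW : W2 (μ k) μlim ≤
        (∫⁻ p : ℝ × ℝ, ENNReal.ofReal ((p.1 - p.2) ^ 2) ∂γ) ^ (1 / 2 : ℝ) :=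
      iInf₂_le γ ⟨hfst, hsnd⟩
    have hcalc : (∫⁻ p : ℝ × ℝ, ENNReal.ofReal ((p.1 - p.2) ^ 2) ∂γ)
        = ENNReal.ofReal (K ^ 2) *
          ∫⁻ p : ℝ × ℝ, ENNReal.ofReal ((p.1 - p.2) ^ 2) ∂(μ₀.prod ρ) := by
      rw [hγ, lintegral_map (by fun_prop) hTm]
      rw [← lintegral_const_mul _ (by fun_prop)]
      congr 1
      funext p
      rw [← ENNReal.ofReal_mul (sq_nonneg K)]
      congr 1
      simp only [hT, hK, ha, hc]
      ring
    have hsub : (∫⁻ p : ℝ × ℝ, ENNReal.ofReal ((p.1 - p.2) ^ 2) ∂(μ₀.prod ρ)) ^ (1/2 : ℝ)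
        = eLpNorm (fun p : ℝ × ℝ => p.1 - p.2) 2 (μ₀.prod ρ) := by
      rw [eLpNorm_eq_lintegral_rpow_enorm_toReal two_ne_zero ENNReal.ofNat_ne_top,
        show ((2:ℝ≥0∞)).toReal = (2:ℝ) by simp]
      congr 1
      exact lintegral_congr fun p => aux_ofReal_sq _
    have htri : eLpNorm (fun p : ℝ × ℝ => p.1 - p.2) 2 (μ₀.prod ρ)
        ≤ ENNReal.ofReal S := by
      have h1 : eLpNorm (fun p : ℝ × ℝ => p.1) 2 (μ₀.prod ρ)
          = ENNReal.ofReal (Real.sqrt (∫ x, x ^ 2 ∂μ₀)) := by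
        refine aux_eLpNorm _ hμ₀ _ _ measurable_fst ?_
        rw [Measure.map_fst_prod]; simp
      have h2 : eLpNorm (fun p : ℝ × ℝ => p.2) 2 (μ₀.prod ρ)
          = ENNReal.ofReal (Real.sqrt (∫ x, x ^ 2 ∂ρ)) := by
        refine aux_eLpNorm _ hρ _ _ measurable_snd ?_
        rw [Measure.map_snd_prod]; simp
      have := eLpNorm_sub_le (f := fun p : ℝ × ℝ => p.1) (g := fun p : ℝ × ℝ => p.2)
        (by fun_prop) (by fun_prop) one_le_two (μ := μ₀.prod ρ)
      rw [h1, h2] at this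
      refine le_trans ?_ (this.trans ?_)
      · exact le_of_eq rfl
      · rw [hS, ENNReal.ofReal_add (Real.sqrt_nonneg _) (Real.sqrt_nonneg _)]
    calc W2 (μ k) μlim
        ≤ (∫⁻ p : ℝ × ℝ, ENNReal.ofReal ((p.1 - p.2) ^ 2) ∂γ) ^ (1 / 2 : ℝ) := hW
      _ = ENNReal.ofReal K *
          (∫⁻ p : ℝ × ℝ, ENNReal.ofReal ((p.1 - p.2) ^ 2) ∂(μ₀.prod ρ)) ^ (1/2 : ℝ) := by
          rw [hcalc, ENNReal.mul_rpow_of_nonneg _ _ (by norm_num : (0:ℝ) ≤ 1/2)]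
          congr 1
          rw [ENNReal.ofReal_rpow_of_nonneg (sq_nonneg K) (by norm_num),
            ← Real.sqrt_eq_rpow, Real.sqrt_sq (hαk k)]
      _ ≤ ENNReal.ofReal K * ENNReal.ofReal S := by
          gcongr
          rw [hsub]; exact htri
      _ = ENNReal.ofReal (α ^ k * (1 - η) * S) := by
          rw [← ENNReal.ofReal_mul (hαk k)]
  refine ⟨fun k => by simpa [mul_assoc] using key k, ?_⟩
  have h0 : Tendsto (fun k : ℕ => ENNReal.ofReal (α ^ k * ((1 - η) * S))) atTop (𝓝 0) := by
    have : Tendsto (fun k : ℕ => α ^ k * ((1 - η) * S)) atTop (𝓝 0) := by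
      simpa using (tendsto_pow_atTop_nhds_zero_of_lt_one hα0.le hα1).mul_const ((1 - η) * S)
    simpa using ENNReal.tendsto_ofReal this
  refine tendsto_of_tendsto_of_tendsto_of_le_of_le tendsto_const_nhds h0
    (fun k => zero_le) (fun k => ?_)
  simpa [mul_assoc] using key k
end

section
/- Let ρ be a probability measure on ℝ with finite second moment, α ∈ (0,1), and for k ≥ 1 define ρ_k = ∗_{l=0}^{k-1} (α^{k-1-l}(1-α)·id)_♯ρ (the convolution of the pushforwards of ρ under the scalings α^{k-1-l}(1-α)). If ρ has mean 0, then for all m > n ≥ 1, W₂(ρ_n, ρ_m)² ≤ 2 (1-α)² (α^{2n} - α^{2m})/(1 - α²) · ∫ x² dρ(x). In particular, (ρ_k) is a Cauchy sequence in the 2-Wasserstein metric. -/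
open MeasureTheory ProbabilityTheory ENNReal Filter Topology

/-- Iterated convolution: `iterConv f k = f 0 ∗ f 1 ∗ ⋯ ∗ f (k-1)` (with `δ₀` for `k = 0`). -/
noncomputable def iterConv (f : ℕ → Measure ℝ) : ℕ → Measure ℝ
  | 0 => Measure.dirac 0
  | (k + 1) => (iterConv f k).conv (f k)

lemma my_conv_def (μ ν : Measure ℝ) : μ.conv ν = (μ.prod ν).map (fun p : ℝ × ℝ => p.1 + p.2) := rfl

lemma meas_add2 : Measurable (fun p : ℝ × ℝ => p.1 + p.2) := by fun_prop

lemma my_conv_assoc (μ ν ρ : Measure ℝ) [SFinite μ] [SFinite ν] [SFinite ρ] :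
    (μ.conv ν).conv ρ = μ.conv (ν.conv ρ) := by
  rw [my_conv_def, my_conv_def, my_conv_def, my_conv_def]
  have h1 : ((μ.prod ν).map (fun p : ℝ × ℝ => p.1 + p.2)).prod ρ
      = ((μ.prod ν).prod ρ).map (Prod.map (fun p : ℝ × ℝ => p.1 + p.2) (id : ℝ → ℝ)) := by
    conv_lhs => rw [← Measure.map_id (μ := ρ)]
    exact Measure.map_prod_map _ _ meas_add2 measurable_id
  have h2 : μ.prod ((ν.prod ρ).map (fun p : ℝ × ℝ => p.1 + p.2))
      = (μ.prod (ν.prod ρ)).map (Prod.map (id : ℝ → ℝ) (fun p : ℝ × ℝ => p.1 + p.2)) := by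
    conv_lhs => rw [← Measure.map_id (μ := μ)]
    exact Measure.map_prod_map _ _ measurable_id meas_add2
  rw [h1, Measure.map_map meas_add2 (meas_add2.prodMap measurable_id), h2,
    Measure.map_map meas_add2 (measurable_id.prodMap meas_add2),
    ← Measure.prodAssoc_prod (μ := μ) (ν := ν) (τ := ρ),
    Measure.map_map (meas_add2.comp (measurable_id.prodMap meas_add2))
      MeasurableEquiv.prodAssoc.measurable]
  congr 1
  ext p
  simp [MeasurableEquiv.prodAssoc, Prod.map, add_assoc]

instance iterConv_prob (f : ℕ → Measure ℝ) [∀ k, IsProbabilityMeasure (f k)] (k : ℕ) :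
    IsProbabilityMeasure (iterConv f k) := by
  induction k with
  | zero => exact Measure.dirac.isProbabilityMeasure
  | succ k ih => exact Measure.probabilitymeasure_of_probabilitymeasures_conv _ _

lemma iterConv_add (f : ℕ → Measure ℝ) [∀ k, IsProbabilityMeasure (f k)] (a b : ℕ) :
    iterConv f (a + b) = (iterConv f a).conv (iterConv (fun j => f (a + j)) b) := by
  induction b with
  | zero => simp [iterConv, Measure.conv_dirac_zero]
  | succ b ih =>
      show iterConv f (a + b + 1) = _
      rw [iterConv, ih, iterConv, my_conv_assoc]



-- integrable id from integrable sq on prob measure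
lemma integrable_id_of_sq (μ : Measure ℝ) [IsProbabilityMeasure μ]
    (h : Integrable (fun x => x ^ 2) μ) : Integrable (fun x : ℝ => x) μ := by
  have hm : MemLp (fun x : ℝ => x) 2 μ :=
    (memLp_two_iff_integrable_sq aestronglyMeasurable_id).2 h
  exact hm.integrable (by norm_num)

lemma map_scale_integrable (μ : Measure ℝ) [IsProbabilityMeasure μ]
    (h : Integrable (fun x => x ^ 2) μ) (c : ℝ) :
    Integrable (fun x => x ^ 2) (μ.map (fun x => c * x)) := by
  rw [integrable_map_measure (by fun_prop) (by fun_prop)]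
  have : ((fun x : ℝ => x ^ 2) ∘ fun x => c * x) = fun x => c ^ 2 * x ^ 2 := by
    ext x; simp only [Function.comp]; ring
  rw [this]
  exact h.const_mul _

lemma map_scale_integral_sq (μ : Measure ℝ) [IsProbabilityMeasure μ] (c : ℝ) :
    ∫ x, x ^ 2 ∂(μ.map (fun x => c * x)) = c ^ 2 * ∫ x, x ^ 2 ∂μ := by
  rw [integral_map (by fun_prop) (by fun_prop)]
  rw [← integral_const_mul]
  congr 1; ext x; ring

lemma map_scale_integral (μ : Measure ℝ) [IsProbabilityMeasure μ] (c : ℝ) :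
    ∫ x, x ∂(μ.map (fun x => c * x)) = c * ∫ x, x ∂μ := by
  rw [integral_map (f := fun x : ℝ => x) (by fun_prop) aestronglyMeasurable_id, ← integral_const_mul]

lemma conv_sq_integrable_prod (μ ν : Measure ℝ) [IsProbabilityMeasure μ] [IsProbabilityMeasure ν]
    (hμ : Integrable (fun x => x ^ 2) μ) (hν : Integrable (fun x => x ^ 2) ν) :
    Integrable (fun p : ℝ × ℝ => (p.1 + p.2) ^ 2) (μ.prod ν) := by
  have h1 : Integrable (fun p : ℝ × ℝ => p.1 ^ 2 * 1) (μ.prod ν) :=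
    hμ.mul_prod (integrable_const 1)
  have h2 : Integrable (fun p : ℝ × ℝ => p.1 * p.2) (μ.prod ν) :=
    (integrable_id_of_sq μ hμ).mul_prod (integrable_id_of_sq ν hν)
  have h3 : Integrable (fun p : ℝ × ℝ => (1 : ℝ) * p.2 ^ 2) (μ.prod ν) :=
    (integrable_const 1).mul_prod hν
  have := (h1.add (h2.const_mul 2)).add h3
  apply this.congr
  filter_upwards with p
  simp only [Pi.add_apply]
  ring

lemma conv_sq_integrable (μ ν : Measure ℝ) [IsProbabilityMeasure μ] [IsProbabilityMeasure ν]
    (hμ : Integrable (fun x => x ^ 2) μ) (hν : Integrable (fun x => x ^ 2) ν) :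
    Integrable (fun x => x ^ 2) (μ.conv ν) := by
  rw [Measure.conv, integrable_map_measure (by fun_prop) (by fun_prop)]
  exact conv_sq_integrable_prod μ ν hμ hν

lemma conv_integral_sq (μ ν : Measure ℝ) [IsProbabilityMeasure μ] [IsProbabilityMeasure ν]
    (hμ : Integrable (fun x => x ^ 2) μ) (hν : Integrable (fun x => x ^ 2) ν) :
    ∫ x, x ^ 2 ∂(μ.conv ν) =
      (∫ x, x ^ 2 ∂μ) + 2 * (∫ x, x ∂μ) * (∫ x, x ∂ν) + ∫ x, x ^ 2 ∂ν := by
  rw [Measure.conv, integral_map (by fun_prop) (by fun_prop)]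
  have : ∀ p : ℝ × ℝ, (p.1 + p.2) ^ 2 = p.1 ^ 2 * 1 + 2 * (p.1 * p.2) + 1 * p.2 ^ 2 := by
    intro p; ring
  simp_rw [this]
  have h1 : Integrable (fun p : ℝ × ℝ => p.1 ^ 2 * 1) (μ.prod ν) :=
    hμ.mul_prod (integrable_const 1)
  have h2 : Integrable (fun p : ℝ × ℝ => 2 * (p.1 * p.2)) (μ.prod ν) :=
    ((integrable_id_of_sq μ hμ).mul_prod (integrable_id_of_sq ν hν)).const_mul 2
  have h3 : Integrable (fun p : ℝ × ℝ => (1 : ℝ) * p.2 ^ 2) (μ.prod ν) :=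
    (integrable_const 1).mul_prod hν
  have h12 : Integrable (fun p : ℝ × ℝ => p.1 ^ 2 * 1 + 2 * (p.1 * p.2)) (μ.prod ν) := h1.add h2
  rw [integral_add h12 h3, integral_add h1 h2, integral_const_mul,
    integral_prod_mul (μ := μ) (ν := ν) (fun x : ℝ => x ^ 2) (fun _ : ℝ => (1 : ℝ)),
    integral_prod_mul (μ := μ) (ν := ν) (fun x : ℝ => x) (fun x : ℝ => x),
    integral_prod_mul (μ := μ) (ν := ν) (fun _ : ℝ => (1 : ℝ)) (fun x : ℝ => x ^ 2)]
  simp [measure_univ]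
  ring

lemma conv_integral (μ ν : Measure ℝ) [IsProbabilityMeasure μ] [IsProbabilityMeasure ν]
    (hμ : Integrable (fun x : ℝ => x) μ) (hν : Integrable (fun x : ℝ => x) ν) :
    ∫ x, x ∂(μ.conv ν) = (∫ x, x ∂μ) + ∫ x, x ∂ν := by
  rw [Measure.conv, integral_map (f := fun x : ℝ => x) (by fun_prop) aestronglyMeasurable_id]
  have h1 : Integrable (fun p : ℝ × ℝ => p.1) (μ.prod ν) := by
    have := hμ.mul_prod (μ := μ) (ν := ν) (integrable_const (1:ℝ))
    simpa using this
  have h2 : Integrable (fun p : ℝ × ℝ => p.2) (μ.prod ν) := by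
    have := (integrable_const (1:ℝ)).mul_prod (μ := μ) (ν := ν) hν
    simpa using this
  rw [integral_add h1 h2]
  congr 1
  · have := integral_prod_mul (μ := μ) (ν := ν) (fun x : ℝ => x) (fun _ : ℝ => (1:ℝ))
    simpa [measure_univ] using this
  · have := integral_prod_mul (μ := μ) (ν := ν) (fun _ : ℝ => (1:ℝ)) (fun x : ℝ => x)
    simpa [measure_univ] using this

lemma W2_le_coupling {μ ν : Measure ℝ} (γ : Measure (ℝ × ℝ))
    (h1 : γ.map Prod.fst = μ) (h2 : γ.map Prod.snd = ν) :
    W2 μ ν ≤ (∫⁻ p : ℝ × ℝ, ENNReal.ofReal ((p.1 - p.2) ^ 2) ∂γ) ^ (1 / 2 : ℝ) :=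
  iInf₂_le γ ⟨h1, h2⟩

lemma W2_self (μ : Measure ℝ) : W2 μ μ = 0 := by
  have hd : Measurable (fun x : ℝ => (x, x)) := by fun_prop
  have h1 : (μ.map (fun x : ℝ => (x, x))).map Prod.fst = μ := by
    rw [Measure.map_map measurable_fst hd]; exact Measure.map_id
  have h2 : (μ.map (fun x : ℝ => (x, x))).map Prod.snd = μ := by
    rw [Measure.map_map measurable_snd hd]; exact Measure.map_id
  have := W2_le_coupling _ h1 h2
  have hc : (∫⁻ p : ℝ × ℝ, ENNReal.ofReal ((p.1 - p.2) ^ 2) ∂(μ.map (fun x : ℝ => (x, x)))) = 0 := by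
    rw [lintegral_map (by fun_prop) hd]
    simp
  rw [hc] at this
  simpa [ENNReal.zero_rpow_of_pos] using this

lemma W2_symm (μ ν : Measure ℝ) : W2 μ ν = W2 ν μ := by
  have key : ∀ μ ν : Measure ℝ, W2 ν μ ≤ W2 μ ν := by
    intro μ ν
    refine le_iInf₂ fun γ hγ => ?_
    obtain ⟨h1, h2⟩ := hγ
    have hsw : Measurable (Prod.swap : ℝ × ℝ → ℝ × ℝ) := measurable_swap
    have e1 : (γ.map Prod.swap).map Prod.fst = ν := by
      rw [Measure.map_map measurable_fst hsw]; exact h2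
    have e2 : (γ.map Prod.swap).map Prod.snd = μ := by
      rw [Measure.map_map measurable_snd hsw]; exact h1
    refine (W2_le_coupling _ e1 e2).trans (le_of_eq ?_)
    congr 1
    rw [lintegral_map (by fun_prop) hsw]
    congr 1; ext p; rw [Prod.fst_swap, Prod.snd_swap]; congr 1; ring
  exact le_antisymm (key ν μ) (key μ ν)

lemma W2_conv_le (ν μ : Measure ℝ) [IsProbabilityMeasure ν] [IsProbabilityMeasure μ] :
    W2 μ (ν.conv μ) ≤ (∫⁻ x : ℝ, ENNReal.ofReal (x ^ 2) ∂ν) ^ (1 / 2 : ℝ) := by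
  set T : ℝ × ℝ → ℝ × ℝ := fun p => (p.2, p.1 + p.2) with hT
  have hTm : Measurable T := by fun_prop
  set γ := (ν.prod μ).map T with hγ
  have h1 : γ.map Prod.fst = μ := by
    rw [hγ, Measure.map_map measurable_fst hTm]
    have : (Prod.fst ∘ T) = (Prod.snd : ℝ × ℝ → ℝ) := rfl
    rw [this, Measure.map_snd_prod]; simp
  have h2 : γ.map Prod.snd = ν.conv μ := by
    rw [hγ, Measure.map_map measurable_snd hTm]
    rfl
  refine (W2_le_coupling γ h1 h2).trans (le_of_eq ?_)
  congr 1
  rw [hγ, lintegral_map (by fun_prop) hTm]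
  have : ∀ p : ℝ × ℝ, ENNReal.ofReal (((T p).1 - (T p).2) ^ 2) = ENNReal.ofReal (p.1 ^ 2) := by
    intro p; rw [hT]; congr 1; ring
  simp_rw [this]
  rw [MeasureTheory.lintegral_prod _ (by fun_prop)]
  simp [lintegral_const, measure_univ, mul_one]

lemma iterConv_moments (f : ℕ → Measure ℝ) [hp : ∀ k, IsProbabilityMeasure (f k)]
    (hint : ∀ k, Integrable (fun x => x ^ 2) (f k)) (hmean : ∀ k, ∫ x, x ∂(f k) = 0) (k : ℕ) :
    Integrable (fun x => x ^ 2) (iterConv f k) ∧ (∫ x, x ∂(iterConv f k)) = 0 ∧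
      (∫ x, x ^ 2 ∂(iterConv f k)) = ∑ l ∈ Finset.range k, ∫ x, x ^ 2 ∂(f l) := by
  induction k with
  | zero =>
      refine ⟨?_, ?_, ?_⟩
      · show Integrable _ (Measure.dirac 0)
        exact ⟨(measurable_id.pow_const 2).aestronglyMeasurable, by
          unfold HasFiniteIntegral; rw [lintegral_dirac]; exact ENNReal.coe_lt_top⟩
      · show (∫ x, x ∂(Measure.dirac (0:ℝ))) = 0
        simp [integral_dirac]
      · show (∫ x, x ^ 2 ∂(Measure.dirac (0:ℝ))) = _
        simp [integral_dirac]
  | succ k ih =>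
      obtain ⟨ih1, ih2, ih3⟩ := ih
      haveI : IsProbabilityMeasure (iterConv f k) := by
        clear ih1 ih2 ih3
        induction k with
        | zero => exact Measure.dirac.isProbabilityMeasure
        | succ k ih => exact Measure.probabilitymeasure_of_probabilitymeasures_conv _ _
      refine ⟨conv_sq_integrable _ _ ih1 (hint k), ?_, ?_⟩
      · show (∫ x, x ∂((iterConv f k).conv (f k))) = 0
        rw [conv_integral _ _ (integrable_id_of_sq _ ih1) (integrable_id_of_sq _ (hint k)),
          ih2, hmean k, add_zero]
      · show (∫ x, x ^ 2 ∂((iterConv f k).conv (f k))) = _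
        rw [conv_integral_sq _ _ ih1 (hint k), ih2, ih3, Finset.sum_range_succ]
        ring

theorem stmt_9 (ρ : Measure ℝ) [IsProbabilityMeasure ρ]
    (hρ : Integrable (fun x => x ^ 2) ρ) (hmean : ∫ x, x ∂ρ = 0)
    (α : ℝ) (hα : α ∈ Set.Ioo (0 : ℝ) 1)
    (ρk : ℕ → Measure ℝ)
    (hρk : ∀ k, ρk k = iterConv (fun l => ρ.map (fun x => α ^ (k - 1 - l) * (1 - α) * x)) k) :
    (∀ m n, 1 ≤ n → n < m →
      W2 (ρk n) (ρk m) ^ 2 ≤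
        ENNReal.ofReal (2 * (1 - α) ^ 2 * (α ^ (2 * n) - α ^ (2 * m)) / (1 - α ^ 2) *
          ∫ x, x ^ 2 ∂ρ)) ∧
    (∀ ε : ℝ≥0∞, 0 < ε → ∃ N : ℕ, ∀ m n, N ≤ n → N ≤ m → W2 (ρk n) (ρk m) < ε) := by
  obtain ⟨hα0, hα1⟩ := hα
  set M := ∫ x, x ^ 2 ∂ρ with hMdef
  have hM : 0 ≤ M := integral_nonneg fun x => sq_nonneg x
  have hα2 : (0:ℝ) < 1 - α ^ 2 := by nlinarith
  have hprobfam : ∀ k : ℕ, ∀ l : ℕ,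
      IsProbabilityMeasure (ρ.map (fun x => α ^ (k - 1 - l) * (1 - α) * x)) := by
    intro k l
    exact Measure.isProbabilityMeasure_map (by fun_prop)
  have key : ∀ m n, 1 ≤ n → n < m →
      W2 (ρk n) (ρk m) ^ 2 ≤
        ENNReal.ofReal (2 * (1 - α) ^ 2 * (α ^ (2 * n) - α ^ (2 * m)) / (1 - α ^ 2) * M) := by
    intro m n hn hnm
    set f : ℕ → Measure ℝ := fun l => ρ.map (fun x => α ^ (m - 1 - l) * (1 - α) * x) with hf
    haveI hpf : ∀ l, IsProbabilityMeasure (f l) := hprobfam m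
    haveI hpg : ∀ l, IsProbabilityMeasure
        ((fun l => ρ.map (fun x => α ^ (n - 1 - l) * (1 - α) * x)) l) := hprobfam n
    set d := m - n with hd
    have hdm : d + n = m := by omega
    have hshift : (fun j => f (d + j))
        = (fun l => ρ.map (fun x => α ^ (n - 1 - l) * (1 - α) * x)) := by
      funext j
      have he : m - 1 - (d + j) = n - 1 - j := by omega
      rw [hf]
      simp only [he]
    have hsplit : ρk m = (iterConv f d).conv (ρk n) := by
      rw [hρk m, hρk n]
      calc iterConv f m = iterConv f (d + n) := by rw [hdm]
        _ = (iterConv f d).conv (iterConv (fun j => f (d + j)) n) := iterConv_add f d n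
        _ = _ := by rw [hshift]
    set ν := iterConv f d with hν
    haveI : IsProbabilityMeasure ν := iterConv_prob f d
    haveI : IsProbabilityMeasure (ρk n) := by
      rw [hρk n]; exact iterConv_prob _ n
    obtain ⟨hint, hmean0, hsq⟩ := iterConv_moments f
      (fun l => map_scale_integrable ρ hρ _)
      (fun l => by rw [hf]; simp only; rw [map_scale_integral, hmean, mul_zero]) d
    have hW : W2 (ρk n) (ρk m) ≤ (∫⁻ x : ℝ, ENNReal.ofReal (x ^ 2) ∂ν) ^ (1 / 2 : ℝ) := by
      rw [hsplit]
      exact W2_conv_le ν (ρk n)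
    have hpow : W2 (ρk n) (ρk m) ^ 2 ≤ ∫⁻ x : ℝ, ENNReal.ofReal (x ^ 2) ∂ν := by
      calc W2 (ρk n) (ρk m) ^ 2
          ≤ ((∫⁻ x : ℝ, ENNReal.ofReal (x ^ 2) ∂ν) ^ (1 / 2 : ℝ)) ^ 2 :=
            pow_le_pow_left' hW 2
        _ = ∫⁻ x : ℝ, ENNReal.ofReal (x ^ 2) ∂ν := by
            rw [← ENNReal.rpow_natCast _ 2, ← ENNReal.rpow_mul]
            norm_num
    have hlint : (∫⁻ x : ℝ, ENNReal.ofReal (x ^ 2) ∂ν) = ENNReal.ofReal (∫ x, x ^ 2 ∂ν) :=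
      (ofReal_integral_eq_lintegral_ofReal hint
        (Filter.Eventually.of_forall fun x => sq_nonneg x)).symm
    have hα2ne : (α : ℝ) ^ 2 ≠ 1 := by nlinarith
    have hsum : ∑ l ∈ Finset.range d, (α ^ 2) ^ (m - 1 - l)
        = (α ^ (2 * n) - α ^ (2 * m)) / (1 - α ^ 2) := by
      have h1 : ∀ l ∈ Finset.range d, (α ^ 2) ^ (m - 1 - l) = (α ^ 2) ^ (n + (d - 1 - l)) := by
        intro l hl
        rw [Finset.mem_range] at hl
        congr 1
        omega
      rw [Finset.sum_congr rfl h1, Finset.sum_range_reflect (fun j => (α ^ 2) ^ (n + j)) d]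
      have h2 : ∀ j ∈ Finset.range d, (α ^ 2) ^ (n + j) = (α ^ 2) ^ n * (α ^ 2) ^ j := by
        intro j _; rw [pow_add]
      rw [Finset.sum_congr rfl h2, ← Finset.mul_sum, geom_sum_eq hα2ne]
      have e1 : α ^ (2 * n) = (α ^ 2) ^ n := by rw [pow_mul]
      have e2 : α ^ (2 * m) = (α ^ 2) ^ m := by rw [pow_mul]
      have e3 : (α ^ 2) ^ m = (α ^ 2) ^ n * (α ^ 2) ^ d := by rw [← pow_add, ← hdm, add_comm]
      rw [e1, e2, e3]
      have hne1 : (1:ℝ) - α ^ 2 ≠ 0 := ne_of_gt hα2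
      have hne2 : α ^ 2 - 1 ≠ 0 := fun h => hne1 (by linarith)
      field_simp
      ring
    have hval : (∫ x, x ^ 2 ∂ν) = (1 - α) ^ 2 * ((α ^ (2 * n) - α ^ (2 * m)) / (1 - α ^ 2)) * M := by
      rw [hsq]
      have h1 : ∀ l ∈ Finset.range d,
          (∫ x, x ^ 2 ∂(f l)) = (α ^ 2) ^ (m - 1 - l) * ((1 - α) ^ 2 * M) := by
        intro l _
        rw [hf]
        simp only
        rw [map_scale_integral_sq]
        rw [← hMdef]
        ring
      rw [Finset.sum_congr rfl h1, ← Finset.sum_mul, hsum]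
      ring
    have hXpos : 0 ≤ α ^ (2 * n) - α ^ (2 * m) := by
      have := pow_le_pow_of_le_one hα0.le hα1.le (by omega : 2 * n ≤ 2 * m)
      linarith
    have hA : 0 ≤ (1 - α) ^ 2 * ((α ^ (2 * n) - α ^ (2 * m)) / (1 - α ^ 2)) * M :=
      mul_nonneg (mul_nonneg (sq_nonneg _) (div_nonneg hXpos hα2.le)) hM
    calc W2 (ρk n) (ρk m) ^ 2
        ≤ ∫⁻ x : ℝ, ENNReal.ofReal (x ^ 2) ∂ν := hpow
      _ = ENNReal.ofReal (∫ x, x ^ 2 ∂ν) := hlint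
      _ ≤ ENNReal.ofReal (2 * (1 - α) ^ 2 * (α ^ (2 * n) - α ^ (2 * m)) / (1 - α ^ 2) * M) := by
          apply ENNReal.ofReal_le_ofReal
          rw [hval]
          have : 2 * (1 - α) ^ 2 * (α ^ (2 * n) - α ^ (2 * m)) / (1 - α ^ 2) * M
              = 2 * ((1 - α) ^ 2 * ((α ^ (2 * n) - α ^ (2 * m)) / (1 - α ^ 2)) * M) := by
            ring
          rw [this]
          linarith
  refine ⟨key, ?_⟩
  intro ε hε
  set c0 : ℝ := 2 * (1 - α) ^ 2 / (1 - α ^ 2) * M with hc0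
  have hc0n : 0 ≤ c0 := by
    apply mul_nonneg _ hM
    positivity
  set b : ℕ → ℝ≥0∞ := fun N => ENNReal.ofReal (c0 * α ^ (2 * N)) with hb
  have hbound : ∀ N n m, N ≤ n → 1 ≤ n → n < m → W2 (ρk n) (ρk m) ^ 2 ≤ b N := by
    intro N n m hNn h1n hnm
    refine (key m n h1n hnm).trans ?_
    apply ENNReal.ofReal_le_ofReal
    have hx : α ^ (2 * n) - α ^ (2 * m) ≤ α ^ (2 * N) := by
      have h1 : α ^ (2 * n) ≤ α ^ (2 * N) :=
        pow_le_pow_of_le_one hα0.le hα1.le (by omega)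
      have h2 : 0 ≤ α ^ (2 * m) := by positivity
      linarith
    calc 2 * (1 - α) ^ 2 * (α ^ (2 * n) - α ^ (2 * m)) / (1 - α ^ 2) * M
        = (2 * (1 - α) ^ 2 / (1 - α ^ 2) * M) * (α ^ (2 * n) - α ^ (2 * m)) := by ring
      _ ≤ (2 * (1 - α) ^ 2 / (1 - α ^ 2) * M) * α ^ (2 * N) := by
          apply mul_le_mul_of_nonneg_left hx
          apply mul_nonneg _ hM
          positivity
      _ = c0 * α ^ (2 * N) := by rw [hc0]
  have htend : Tendsto b atTop (𝓝 0) := by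
    have h1 : Tendsto (fun N : ℕ => c0 * α ^ (2 * N)) atTop (𝓝 0) := by
      have h2 : Tendsto (fun N : ℕ => (α ^ 2) ^ N) atTop (𝓝 0) :=
        tendsto_pow_atTop_nhds_zero_of_lt_one (by positivity) (by nlinarith)
      have h3 := h2.const_mul c0
      simp only [mul_zero] at h3
      refine h3.congr fun N => ?_
      rw [pow_mul]
    have := (ENNReal.continuous_ofReal.tendsto 0).comp h1
    rw [ENNReal.ofReal_zero] at this; exact this
  have hε2 : (0 : ℝ≥0∞) < ε ^ 2 := pos_iff_ne_zero.2 (pow_ne_zero 2 (pos_iff_ne_zero.1 hε))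
  obtain ⟨N0, hN0⟩ := (htend.eventually_lt_const hε2).exists_forall_of_atTop
  refine ⟨max N0 1, fun m n hn hm => ?_⟩
  have h1n : 1 ≤ n := le_trans (le_max_right _ _) hn
  have h1m : 1 ≤ m := le_trans (le_max_right _ _) hm
  have hN0n : N0 ≤ n := le_trans (le_max_left _ _) hn
  have hN0m : N0 ≤ m := le_trans (le_max_left _ _) hm
  have hlt : ∀ a b : ℕ, 1 ≤ a → a < b → N0 ≤ a → W2 (ρk a) (ρk b) < ε := by
    intro a b h1a hab hNa
    have hsq := (hbound a a b le_rfl h1a hab).trans_lt (hN0 a hNa)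
    by_contra hcon
    push_neg at hcon
    exact absurd (pow_le_pow_left' hcon 2) (not_le.2 hsq)
  rcases lt_trichotomy n m with h | h | h
  · exact hlt n m h1n h hN0n
  · subst h
    rw [W2_self]
    exact hε
  · rw [W2_symm]
    exact hlt m n h1m h hN0m
end

section
/- Let μ and ν be Gaussian probability measures on ℝ with means m_μ, m_ν and variances σ_μ², σ_ν². Then W₂(μ, ν)² = |m_μ - m_ν|² + |σ_μ - σ_ν|². -/
open MeasureTheory ProbabilityTheory ENNReal Filter Topology

section W2auxsec
open Real Set

namespace W2aux

theorem aux_deriv (x : ℝ) : HasDerivAt (fun x : ℝ => -x * Real.exp (-(1/2) * x^2))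
      ((x^2 - 1) * Real.exp (-(1/2) * x^2)) x := by
  have h : HasDerivAt (fun x : ℝ => -(1/2) * x^2) (-(1/2) * (2*x)) x :=
    ((hasDerivAt_pow 2 x).const_mul _).congr_deriv (by ring)
  have h2 := ((hasDerivAt_id x).neg.mul h.exp)
  exact h2.congr_deriv (by simp only [Pi.neg_apply, id]; ring)

theorem aux_int2 : Integrable (fun x : ℝ => x^2 * Real.exp (-(1/2) * x^2)) := by
  have := integrable_rpow_mul_exp_neg_mul_sq (b := 1/2) (by norm_num) (s := 2) (by norm_num)
  have e : ∀ x : ℝ, x ^ (2:ℝ) = x ^ 2 := fun x => Real.rpow_natCast x 2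
  simpa [e] using this

theorem aux_int1 : Integrable (fun x : ℝ => x * Real.exp (-(1/2) * x^2)) :=
  integrable_mul_exp_neg_mul_sq (by norm_num)

theorem aux_int0 : Integrable (fun x : ℝ => Real.exp (-(1/2) * x^2)) :=
  integrable_exp_neg_mul_sq (by norm_num)

theorem aux_tend : Tendsto (fun x : ℝ => -x * Real.exp (-(1/2) * x^2)) atTop (𝓝 0) := by
  have h := tendsto_rpow_abs_mul_exp_neg_mul_sq_cocompact (a := 1/2) (by norm_num) 1
  have h2 : Tendsto (fun x : ℝ => |x| ^ (1:ℝ) * Real.exp (-(1/2) * x^2)) atTop (𝓝 0) :=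
    h.mono_left (by rw [cocompact_eq_atBot_atTop]; exact le_sup_right)
  have h3 : Tendsto (fun x : ℝ => x * Real.exp (-(1/2) * x^2)) atTop (𝓝 0) := by
    refine h2.congr' ?_
    filter_upwards [eventually_ge_atTop (0:ℝ)] with x hx
    rw [Real.rpow_one, abs_of_nonneg hx]
  simpa using h3.neg

theorem moment2_Ioi : ∫ x in Ioi (0:ℝ), x^2 * Real.exp (-(1/2) * x^2)
    = ∫ x in Ioi (0:ℝ), Real.exp (-(1/2) * x^2) := by
  have hint : IntegrableOn (fun x : ℝ => (x^2 - 1) * Real.exp (-(1/2) * x^2)) (Ioi 0) := by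
    simpa [sub_mul, Pi.sub_def] using (aux_int2.sub aux_int0).integrableOn
  have key := integral_Ioi_of_hasDerivAt_of_tendsto'
    (f' := fun x => (x^2-1) * Real.exp (-(1/2)*x^2)) (fun x _ => aux_deriv x) hint aux_tend
  simp only [sub_mul, one_mul] at key
  rw [integral_sub aux_int2.integrableOn aux_int0.integrableOn] at key
  simp only [neg_mul, mul_zero, neg_zero, Real.exp_zero, mul_one, zero_mul, sub_zero,
    neg_neg] at key ⊢
  linarith [key]

theorem moment2_total : ∫ x : ℝ, x^2 * Real.exp (-(1/2) * x^2) = Real.sqrt (2*π) := by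
  have hsplit := intervalIntegral.integral_Iic_add_Ioi (b := (0:ℝ)) aux_int2.integrableOn aux_int2.integrableOn
  have heven : ∫ x in Iic (0:ℝ), x^2 * Real.exp (-(1/2) * x^2)
      = ∫ x in Ioi (0:ℝ), x^2 * Real.exp (-(1/2) * x^2) := by
    have := integral_comp_neg_Iic (0:ℝ) (fun x => x^2 * Real.exp (-(1/2) * x^2))
    simpa using this
  have hg : ∫ x : ℝ, Real.exp (-(1/2) * x^2) = Real.sqrt (2*π) := by
    have := integral_gaussian (1/2)
    rw [this]
    norm_num [div_div_eq_mul_div, div_eq_mul_inv, mul_comm]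
  have hgsplit := intervalIntegral.integral_Iic_add_Ioi (b := (0:ℝ)) aux_int0.integrableOn aux_int0.integrableOn
  have hgeven : ∫ x in Iic (0:ℝ), Real.exp (-(1/2) * x^2)
      = ∫ x in Ioi (0:ℝ), Real.exp (-(1/2) * x^2) := by
    have := integral_comp_neg_Iic (0:ℝ) (fun x => Real.exp (-(1/2) * x^2))
    simpa using this
  rw [← hsplit, heven, moment2_Ioi]
  rw [← hg, ← hgsplit, hgeven]

theorem moment1_total : ∫ x : ℝ, x * Real.exp (-(1/2) * x^2) = 0 := by
  have hsplit := intervalIntegral.integral_Iic_add_Ioi (b := (0:ℝ)) aux_int1.integrableOn aux_int1.integrableOn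
  have hodd : ∫ x in Iic (0:ℝ), x * Real.exp (-(1/2) * x^2)
      = - ∫ x in Ioi (0:ℝ), x * Real.exp (-(1/2) * x^2) := by
    have := integral_comp_neg_Iic (0:ℝ) (fun x => x * Real.exp (-(1/2) * x^2))
    simp only [neg_zero] at this
    rw [← this, ← integral_neg]
    congr 1 with x
    simp
  rw [← hsplit, hodd]
  ring

theorem pdf_eq (x : ℝ) : gaussianPDFReal 0 1 x = (Real.sqrt (2*π))⁻¹ * Real.exp (-(1/2) * x^2) := by
  rw [gaussianPDFReal_def]
  simp only [NNReal.coe_one, mul_one, sub_zero]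
  congr 1
  ring_nf

theorem std_eq : gaussianReal 0 1
    = (volume : Measure ℝ).withDensity (fun x => ((gaussianPDFReal 0 1 x).toNNReal : ℝ≥0∞)) := by
  rw [gaussianReal_of_var_ne_zero 0 one_ne_zero]
  rfl

theorem integral_std (f : ℝ → ℝ) :
    ∫ x, f x ∂(gaussianReal 0 1) = ∫ x, gaussianPDFReal 0 1 x * f x := by
  rw [std_eq, integral_withDensity_eq_integral_smul
    (measurable_gaussianPDFReal 0 1).real_toNNReal f]
  congr 1 with x
  simp [NNReal.smul_def, Real.coe_toNNReal _ (gaussianPDFReal_nonneg 0 1 x)]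

theorem integrable_std_iff {f : ℝ → ℝ} :
    Integrable f (gaussianReal 0 1) ↔ Integrable (fun x => gaussianPDFReal 0 1 x * f x) := by
  rw [std_eq,
    integrable_withDensity_iff_integrable_coe_smul (measurable_gaussianPDFReal 0 1).real_toNNReal]
  constructor <;> intro h <;>
  · refine h.congr (Eventually.of_forall fun x => ?_)
    simp [NNReal.smul_def, Real.coe_toNNReal _ (gaussianPDFReal_nonneg 0 1 x)]

theorem integrable_sq_std : Integrable (fun x : ℝ => x^2) (gaussianReal 0 1) := by
  rw [integrable_std_iff]
  refine (aux_int2.const_mul ((Real.sqrt (2*π))⁻¹)).congr (Eventually.of_forall fun x => ?_)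
  simp only [pdf_eq]; ring

theorem integrable_id_std : Integrable (fun x : ℝ => x) (gaussianReal 0 1) := by
  rw [integrable_std_iff]
  refine (aux_int1.const_mul ((Real.sqrt (2*π))⁻¹)).congr (Eventually.of_forall fun x => ?_)
  simp only [pdf_eq]; ring

-- placeholders from previous parts
theorem sqrt_two_pi_pos : 0 < Real.sqrt (2*π) := Real.sqrt_pos.mpr (by positivity)

theorem moment2_std : ∫ x, x^2 ∂(gaussianReal 0 1) = 1 := by
  rw [integral_std]
  have : (fun x : ℝ => gaussianPDFReal 0 1 x * x^2)
      = fun x => (Real.sqrt (2*π))⁻¹ * (x^2 * Real.exp (-(1/2) * x^2)) := by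
    funext x; simp only [pdf_eq]; ring
  rw [this, integral_const_mul, moment2_total, inv_mul_cancel₀ sqrt_two_pi_pos.ne']

theorem moment1_std : ∫ x, x ∂(gaussianReal 0 1) = 0 := by
  rw [integral_std]
  have : (fun x : ℝ => gaussianPDFReal 0 1 x * x)
      = fun x => (Real.sqrt (2*π))⁻¹ * (x * Real.exp (-(1/2) * x^2)) := by
    funext x; simp only [pdf_eq]; ring
  rw [this, integral_const_mul, moment1_total, mul_zero]

theorem affine (m : ℝ) (v : NNReal) :
    gaussianReal m v = (gaussianReal 0 1).map (fun x => Real.sqrt v * x + m) := by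
  have h1 : (fun x : ℝ => Real.sqrt v * x + m) = (· + m) ∘ (Real.sqrt v * ·) := rfl
  rw [h1, ← Measure.map_map (measurable_add_const m) (measurable_const_mul _),
    gaussianReal_map_const_mul, gaussianReal_map_add_const]
  congr 1
  · simp
  · ext
    simp [Real.sq_sqrt v.2]

theorem meas_affine (c m : ℝ) : Measurable (fun x : ℝ => c * x + m) :=
  (measurable_const_mul c).add_const m

theorem integrable_poly (a b c : ℝ) :
    Integrable (fun x : ℝ => a * x^2 + b * x + c) (gaussianReal 0 1) := by
  have h1 : Integrable (fun x : ℝ => a * x^2) (gaussianReal 0 1) := integrable_sq_std.const_mul a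
  have h2 : Integrable (fun x : ℝ => b * x) (gaussianReal 0 1) := integrable_id_std.const_mul b
  have h3 : Integrable (fun _ : ℝ => c) (gaussianReal 0 1) := integrable_const c
  exact (h1.add h2).add h3

theorem integral_poly (a b c : ℝ) :
    ∫ x, (a * x^2 + b * x + c) ∂(gaussianReal 0 1) = a + c := by
  have h1 : Integrable (fun x : ℝ => a * x^2) (gaussianReal 0 1) := integrable_sq_std.const_mul a
  have h2 : Integrable (fun x : ℝ => b * x) (gaussianReal 0 1) := integrable_id_std.const_mul b
  have h12 : Integrable (fun x : ℝ => a * x^2 + b * x) (gaussianReal 0 1) := h1.add h2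
  rw [integral_add h12 (integrable_const c), integral_add h1 h2, integral_const_mul,
    integral_const_mul, moment2_std, moment1_std, integral_const]
  simp

theorem integrable_comp_affine {f : ℝ → ℝ} (hf : Measurable f) (m : ℝ) (v : NNReal)
    (h : Integrable (fun x => f (Real.sqrt v * x + m)) (gaussianReal 0 1)) :
    Integrable f (gaussianReal m v) := by
  rw [affine m v]
  exact (integrable_map_measure hf.aestronglyMeasurable (meas_affine _ m).aemeasurable).mpr h

theorem integral_comp_affine {f : ℝ → ℝ} (hf : Measurable f) (m : ℝ) (v : NNReal) :
    ∫ x, f x ∂(gaussianReal m v) = ∫ x, f (Real.sqrt v * x + m) ∂(gaussianReal 0 1) := by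
  rw [affine m v]
  exact integral_map (meas_affine _ m).aemeasurable hf.aestronglyMeasurable

theorem integrable_sq_gauss (m : ℝ) (v : NNReal) :
    Integrable (fun x : ℝ => x^2) (gaussianReal m v) := by
  refine integrable_comp_affine (measurable_id'.pow_const 2) m v ?_
  exact (integrable_poly (Real.sqrt v ^ 2) (2 * Real.sqrt v * m) (m^2)).congr
    (Eventually.of_forall fun x => by ring)

theorem integrable_id_gauss (m : ℝ) (v : NNReal) :
    Integrable (fun x : ℝ => x) (gaussianReal m v) := by
  refine integrable_comp_affine measurable_id' m v ?_
  exact (integrable_poly 0 (Real.sqrt v) m).congr (Eventually.of_forall fun x => by ring)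

theorem mean_gauss (m : ℝ) (v : NNReal) : ∫ x, x ∂(gaussianReal m v) = m := by
  rw [integral_comp_affine measurable_id' m v,
    show (fun x : ℝ => Real.sqrt v * x + m) = fun x : ℝ => 0 * x^2 + Real.sqrt v * x + m by
      funext x; ring, integral_poly]
  ring

theorem var_gauss (m : ℝ) (v : NNReal) :
    ∫ x, (x - m)^2 ∂(gaussianReal m v) = v := by
  rw [integral_comp_affine ((measurable_id'.sub_const m).pow_const 2) m v,
    show (fun x : ℝ => (Real.sqrt v * x + m - m)^2)
        = fun x : ℝ => (v:ℝ) * x^2 + 0 * x + 0 by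
      funext x
      have h : (Real.sqrt v : ℝ)^2 = v := Real.sq_sqrt v.2
      rw [add_sub_cancel_right, mul_pow, h]; ring, integral_poly]
  ring

theorem sq_int_gauss (m : ℝ) (v : NNReal) :
    ∫ x, x^2 ∂(gaussianReal m v) = v + m^2 := by
  have h := var_gauss m v
  have h1 : Integrable (fun x : ℝ => x^2) (gaussianReal m v) := integrable_sq_gauss m v
  have h2 : Integrable (fun x : ℝ => -2*m * x) (gaussianReal m v) :=
    (integrable_id_gauss m v).const_mul (-2*m)
  have e : (fun x : ℝ => (x - m)^2) = fun x => x^2 + -2*m * x + m^2 := by funext x; ring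
  have h12 : Integrable (fun x : ℝ => x^2 + -2*m * x) (gaussianReal m v) := h1.add h2
  rw [e, integral_add h12 (integrable_const _), integral_add h1 h2,
    integral_const_mul, mean_gauss, integral_const] at h
  simp only [measure_univ, probReal_univ, ENNReal.toReal_one, smul_eq_mul, one_mul] at h
  linarith

theorem cs_aux {C : ℝ} (s₁ s₂ : ℝ) (hs₁ : 0 ≤ s₁) (hs₂ : 0 ≤ s₂)
    (h : ∀ ε : ℝ, 0 < ε → 2 * C ≤ ε * s₁^2 + ε⁻¹ * s₂^2) : C ≤ s₁ * s₂ := by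
  have half : ∀ ε : ℝ, 0 < ε → C ≤ s₁ * s₂ + ε := by
    intro ε hε
    set δ := ε / (s₁ + s₂ + 1) with hδdef
    have hδ : 0 < δ := div_pos hε (by linarith)
    have key := h ((s₂ + δ) / (s₁ + δ)) (div_pos (by linarith) (by linarith))
    rw [inv_div] at key
    have h1 : (s₂ + δ) / (s₁ + δ) * s₁^2 ≤ (s₂ + δ) * s₁ := by
      rw [div_mul_eq_mul_div, div_le_iff₀ (by linarith)]
      nlinarith [mul_nonneg (mul_nonneg (by linarith : (0:ℝ) ≤ s₂ + δ) hs₁) hδ.le]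
    have h2 : (s₁ + δ) / (s₂ + δ) * s₂^2 ≤ (s₁ + δ) * s₂ := by
      rw [div_mul_eq_mul_div, div_le_iff₀ (by linarith)]
      nlinarith [mul_nonneg (mul_nonneg (by linarith : (0:ℝ) ≤ s₁ + δ) hs₂) hδ.le]
    have h3 : δ * (s₁ + s₂) ≤ ε := by
      rw [hδdef, div_mul_eq_mul_div, div_le_iff₀ (by linarith)]
      nlinarith
    nlinarith
  by_contra hlt
  push_neg at hlt
  have := half ((C - s₁ * s₂)/2) (by linarith)
  linarith

theorem integrable_centered_sq (m : ℝ) (v : NNReal) (c : ℝ) :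
    Integrable (fun x : ℝ => (x - c)^2) (gaussianReal m v) := by
  have h1 : Integrable (fun x : ℝ => x^2) (gaussianReal m v) := integrable_sq_gauss m v
  have h2 : Integrable (fun x : ℝ => -2*c * x) (gaussianReal m v) :=
    (integrable_id_gauss m v).const_mul _
  have h12 : Integrable (fun x : ℝ => x^2 + -2*c * x) (gaussianReal m v) := h1.add h2
  exact (h12.add (integrable_const (c^2))).congr
    (Eventually.of_forall fun x => by simp only [Pi.add_apply]; ring)

theorem integrable_centered (m : ℝ) (v : NNReal) (c : ℝ) :
    Integrable (fun x : ℝ => x - c) (gaussianReal m v) :=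
  (integrable_id_gauss m v).sub (integrable_const c)

theorem mean_centered (m : ℝ) (v : NNReal) (c : ℝ) :
    ∫ x, (x - c) ∂(gaussianReal m v) = m - c := by
  rw [integral_sub (integrable_id_gauss m v) (integrable_const c), mean_gauss, integral_const]
  simp

theorem lb (m₁ m₂ : ℝ) (v₁ v₂ : NNReal) (γ : Measure (ℝ × ℝ))
    (h1 : γ.map Prod.fst = gaussianReal m₁ v₁) (h2 : γ.map Prod.snd = gaussianReal m₂ v₂) :
    ENNReal.ofReal ((m₁ - m₂)^2 + (Real.sqrt v₁ - Real.sqrt v₂)^2)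
      ≤ ∫⁻ p : ℝ × ℝ, ENNReal.ofReal ((p.1 - p.2)^2) ∂γ := by
  haveI : IsProbabilityMeasure γ := by
    constructor
    have h := congrArg (fun μ : Measure ℝ => μ Set.univ) h1
    simp only [Measure.map_apply measurable_fst MeasurableSet.univ, preimage_univ] at h
    rw [h]
    exact measure_univ
  -- transfer integrability and integrals from the marginals
  have t1 : ∀ f : ℝ → ℝ, Measurable f → Integrable f (gaussianReal m₁ v₁) →
      Integrable (fun p : ℝ × ℝ => f p.1) γ := by
    intro f hfm hfi
    rw [← h1] at hfi
    exact (integrable_map_measure hfm.aestronglyMeasurable measurable_fst.aemeasurable).mp hfi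
  have t2 : ∀ f : ℝ → ℝ, Measurable f → Integrable f (gaussianReal m₂ v₂) →
      Integrable (fun p : ℝ × ℝ => f p.2) γ := by
    intro f hfm hfi
    rw [← h2] at hfi
    exact (integrable_map_measure hfm.aestronglyMeasurable measurable_snd.aemeasurable).mp hfi
  have i1 : ∀ f : ℝ → ℝ, Measurable f →
      ∫ p : ℝ × ℝ, f p.1 ∂γ = ∫ x, f x ∂(gaussianReal m₁ v₁) := by
    intro f hfm
    rw [← h1, integral_map measurable_fst.aemeasurable hfm.aestronglyMeasurable]
  have i2 : ∀ f : ℝ → ℝ, Measurable f →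
      ∫ p : ℝ × ℝ, f p.2 ∂γ = ∫ x, f x ∂(gaussianReal m₂ v₂) := by
    intro f hfm
    rw [← h2, integral_map measurable_snd.aemeasurable hfm.aestronglyMeasurable]
  have mA : Measurable (fun x : ℝ => (x - m₁)^2) := (measurable_id'.sub_const m₁).pow_const 2
  have mB : Measurable (fun x : ℝ => (x - m₂)^2) := (measurable_id'.sub_const m₂).pow_const 2
  have hA : Integrable (fun p : ℝ × ℝ => (p.1 - m₁)^2) γ :=
    t1 _ mA (integrable_centered_sq m₁ v₁ m₁)
  have hB : Integrable (fun p : ℝ × ℝ => (p.2 - m₂)^2) γ :=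
    t2 _ mB (integrable_centered_sq m₂ v₂ m₂)
  have hL1 : Integrable (fun p : ℝ × ℝ => p.1 - m₁) γ :=
    t1 _ (measurable_id'.sub_const m₁) (integrable_centered m₁ v₁ m₁)
  have hL2 : Integrable (fun p : ℝ × ℝ => p.2 - m₂) γ :=
    t2 _ (measurable_id'.sub_const m₂) (integrable_centered m₂ v₂ m₂)
  have mC : Measurable (fun p : ℝ × ℝ => (p.1 - m₁) * (p.2 - m₂)) :=
    ((measurable_fst.sub_const m₁).mul (measurable_snd.sub_const m₂))
  have hC : Integrable (fun p : ℝ × ℝ => (p.1 - m₁) * (p.2 - m₂)) γ := by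
    have hbound : Integrable (fun p : ℝ × ℝ => ((p.1 - m₁)^2 + (p.2 - m₂)^2) / 2) γ :=
      (hA.add hB).div_const 2
    refine hbound.mono' mC.aestronglyMeasurable (Eventually.of_forall fun p => ?_)
    rw [Real.norm_eq_abs, abs_mul]
    nlinarith [sq_nonneg (|p.1 - m₁| - |p.2 - m₂|), sq_abs (p.1 - m₁), sq_abs (p.2 - m₂),
      abs_nonneg (p.1 - m₁), abs_nonneg (p.2 - m₂)]
  -- integral values
  have iA : ∫ p : ℝ × ℝ, (p.1 - m₁)^2 ∂γ = (v₁ : ℝ) := by rw [i1 _ mA, var_gauss]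
  have iB : ∫ p : ℝ × ℝ, (p.2 - m₂)^2 ∂γ = (v₂ : ℝ) := by rw [i2 _ mB, var_gauss]
  have iL1 : ∫ p : ℝ × ℝ, (p.1 - m₁) ∂γ = 0 := by
    rw [i1 _ (measurable_id'.sub_const m₁), mean_centered]; ring
  have iL2 : ∫ p : ℝ × ℝ, (p.2 - m₂) ∂γ = 0 := by
    rw [i2 _ (measurable_id'.sub_const m₂), mean_centered]; ring
  -- covariance bound
  set C := ∫ p : ℝ × ℝ, (p.1 - m₁) * (p.2 - m₂) ∂γ with hCdef
  have hCle : C ≤ Real.sqrt v₁ * Real.sqrt v₂ := by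
    refine cs_aux _ _ (Real.sqrt_nonneg _) (Real.sqrt_nonneg _) fun ε hε => ?_
    have pt : ∀ p : ℝ × ℝ, 2 * ((p.1 - m₁) * (p.2 - m₂))
        ≤ ε * (p.1 - m₁)^2 + ε⁻¹ * (p.2 - m₂)^2 := by
      intro p
      have h0 : 0 ≤ (Real.sqrt ε * (p.1 - m₁) - Real.sqrt ε⁻¹ * (p.2 - m₂))^2 := sq_nonneg _
      have e1 : Real.sqrt ε ^ 2 = ε := Real.sq_sqrt hε.le
      have e2 : Real.sqrt ε⁻¹ ^ 2 = ε⁻¹ := Real.sq_sqrt (inv_nonneg.mpr hε.le)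
      have e3 : Real.sqrt ε * Real.sqrt ε⁻¹ = 1 := by
        rw [← Real.sqrt_mul hε.le, mul_inv_cancel₀ hε.ne', Real.sqrt_one]
      have expand : (Real.sqrt ε * (p.1 - m₁) - Real.sqrt ε⁻¹ * (p.2 - m₂))^2
          = Real.sqrt ε ^ 2 * (p.1 - m₁)^2
            - 2 * (Real.sqrt ε * Real.sqrt ε⁻¹) * ((p.1 - m₁) * (p.2 - m₂))
            + Real.sqrt ε⁻¹ ^ 2 * (p.2 - m₂)^2 := by ring
      rw [e1, e2, e3] at expand
      rw [expand] at h0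
      linarith
    have hint : Integrable (fun p : ℝ × ℝ => ε * (p.1 - m₁)^2 + ε⁻¹ * (p.2 - m₂)^2) γ :=
      (hA.const_mul ε).add (hB.const_mul ε⁻¹)
    calc 2 * C = ∫ p : ℝ × ℝ, 2 * ((p.1 - m₁) * (p.2 - m₂)) ∂γ := by
          rw [hCdef, integral_const_mul]
      _ ≤ ∫ p : ℝ × ℝ, (ε * (p.1 - m₁)^2 + ε⁻¹ * (p.2 - m₂)^2) ∂γ :=
          integral_mono (hC.const_mul 2) hint pt
      _ = ε * (v₁:ℝ) + ε⁻¹ * (v₂:ℝ) := by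
          rw [integral_add (hA.const_mul ε) (hB.const_mul ε⁻¹), integral_const_mul,
            integral_const_mul, iA, iB]
      _ ≤ ε * Real.sqrt v₁ ^ 2 + ε⁻¹ * Real.sqrt v₂ ^ 2 := by
          rw [Real.sq_sqrt v₁.coe_nonneg, Real.sq_sqrt v₂.coe_nonneg]
  -- the squared-distance function and its integral
  have hfint : Integrable (fun p : ℝ × ℝ => (p.1 - p.2)^2) γ := by
    have hsum : Integrable (fun p : ℝ × ℝ =>
        (p.1 - m₁)^2 + (p.2 - m₂)^2 + (-2) * ((p.1 - m₁) * (p.2 - m₂))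
        + (2*(m₁ - m₂)) * (p.1 - m₁) + (-(2*(m₁ - m₂))) * (p.2 - m₂) + (m₁ - m₂)^2) γ := by
      have hAB : Integrable (fun p : ℝ × ℝ => (p.1 - m₁)^2 + (p.2 - m₂)^2) γ := hA.add hB
      have h3 : Integrable (fun p : ℝ × ℝ => (p.1 - m₁)^2 + (p.2 - m₂)^2
          + (-2) * ((p.1 - m₁) * (p.2 - m₂))) γ := hAB.add (hC.const_mul _)
      have h4 : Integrable (fun p : ℝ × ℝ => (p.1 - m₁)^2 + (p.2 - m₂)^2
          + (-2) * ((p.1 - m₁) * (p.2 - m₂)) + (2*(m₁ - m₂)) * (p.1 - m₁)) γ :=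
        h3.add (hL1.const_mul (2*(m₁ - m₂)))
      have h5 : Integrable (fun p : ℝ × ℝ => (p.1 - m₁)^2 + (p.2 - m₂)^2
          + (-2) * ((p.1 - m₁) * (p.2 - m₂)) + (2*(m₁ - m₂)) * (p.1 - m₁)
          + (-(2*(m₁ - m₂))) * (p.2 - m₂)) γ :=
        h4.add (hL2.const_mul (-(2*(m₁ - m₂))))
      exact h5.add (integrable_const _)
    exact hsum.congr (Eventually.of_forall fun p => by simp only [Pi.add_apply]; ring)
  have hfval : ∫ p : ℝ × ℝ, (p.1 - p.2)^2 ∂γ = (v₁:ℝ) + v₂ - 2*C + (m₁ - m₂)^2 := by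
    have e : (fun p : ℝ × ℝ => (p.1 - p.2)^2) = fun p =>
        (p.1 - m₁)^2 + (p.2 - m₂)^2 + (-2) * ((p.1 - m₁) * (p.2 - m₂))
        + (2*(m₁ - m₂)) * (p.1 - m₁) + (-(2*(m₁ - m₂))) * (p.2 - m₂) + (m₁ - m₂)^2 := by
      funext p; ring
    have hAB : Integrable (fun p : ℝ × ℝ => (p.1 - m₁)^2 + (p.2 - m₂)^2) γ := hA.add hB
    have h3 : Integrable (fun p : ℝ × ℝ => (p.1 - m₁)^2 + (p.2 - m₂)^2
        + (-2) * ((p.1 - m₁) * (p.2 - m₂))) γ := hAB.add (hC.const_mul _)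
    have h4 : Integrable (fun p : ℝ × ℝ => (p.1 - m₁)^2 + (p.2 - m₂)^2
        + (-2) * ((p.1 - m₁) * (p.2 - m₂)) + (2*(m₁ - m₂)) * (p.1 - m₁)) γ :=
      h3.add (hL1.const_mul (2*(m₁ - m₂)))
    have h5 : Integrable (fun p : ℝ × ℝ => (p.1 - m₁)^2 + (p.2 - m₂)^2
        + (-2) * ((p.1 - m₁) * (p.2 - m₂)) + (2*(m₁ - m₂)) * (p.1 - m₁)
        + (-(2*(m₁ - m₂))) * (p.2 - m₂)) γ :=
      h4.add (hL2.const_mul (-(2*(m₁ - m₂))))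
    rw [e, integral_add h5 (integrable_const _), integral_add h4 (hL2.const_mul _),
      integral_add h3 (hL1.const_mul _), integral_add hAB (hC.const_mul _),
      integral_add hA hB, integral_const_mul, integral_const_mul, integral_const_mul,
      iA, iB, iL1, iL2, integral_const]
    simp only [measure_univ, probReal_univ, ENNReal.toReal_one, smul_eq_mul, one_mul, mul_zero]
    ring
  -- conclude
  have hge : (m₁ - m₂)^2 + (Real.sqrt v₁ - Real.sqrt v₂)^2
      ≤ ∫ p : ℝ × ℝ, (p.1 - p.2)^2 ∂γ := by
    rw [hfval]
    have e1 : Real.sqrt v₁ ^ 2 = (v₁:ℝ) := Real.sq_sqrt v₁.2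
    have e2 : Real.sqrt v₂ ^ 2 = (v₂:ℝ) := Real.sq_sqrt v₂.2
    nlinarith
  calc ENNReal.ofReal ((m₁ - m₂)^2 + (Real.sqrt v₁ - Real.sqrt v₂)^2)
      ≤ ENNReal.ofReal (∫ p : ℝ × ℝ, (p.1 - p.2)^2 ∂γ) := ENNReal.ofReal_le_ofReal hge
    _ = ∫⁻ p : ℝ × ℝ, ENNReal.ofReal ((p.1 - p.2)^2) ∂γ :=
        ofReal_integral_eq_lintegral_ofReal hfint (Eventually.of_forall fun p => sq_nonneg _)

theorem ub (m₁ m₂ : ℝ) (v₁ v₂ : NNReal) :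
    ∃ γ : Measure (ℝ × ℝ), γ.map Prod.fst = gaussianReal m₁ v₁
      ∧ γ.map Prod.snd = gaussianReal m₂ v₂
      ∧ ∫⁻ p : ℝ × ℝ, ENNReal.ofReal ((p.1 - p.2)^2) ∂γ
          = ENNReal.ofReal ((m₁ - m₂)^2 + (Real.sqrt v₁ - Real.sqrt v₂)^2) := by
  set T : ℝ → ℝ × ℝ := fun x => (Real.sqrt v₁ * x + m₁, Real.sqrt v₂ * x + m₂) with hT
  have hTm : Measurable T := (meas_affine _ m₁).prodMk (meas_affine _ m₂)
  refine ⟨(gaussianReal 0 1).map T, ?_, ?_, ?_⟩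
  · rw [Measure.map_map measurable_fst hTm]
    exact (affine m₁ v₁).symm
  · rw [Measure.map_map measurable_snd hTm]
    exact (affine m₂ v₂).symm
  · rw [lintegral_map (f := fun p : ℝ × ℝ => ENNReal.ofReal ((p.1 - p.2)^2))
      (ENNReal.measurable_ofReal.comp
        ((measurable_fst.sub measurable_snd).pow_const 2)) hTm]
    have e : ∀ x : ℝ, ((T x).1 - (T x).2)^2
        = (Real.sqrt v₁ - Real.sqrt v₂)^2 * x^2
          + (2 * (Real.sqrt v₁ - Real.sqrt v₂) * (m₁ - m₂)) * x + (m₁ - m₂)^2 := by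
      intro x; simp only [hT]; ring
    have hint := integrable_poly ((Real.sqrt v₁ - Real.sqrt v₂)^2)
      (2 * (Real.sqrt v₁ - Real.sqrt v₂) * (m₁ - m₂)) ((m₁ - m₂)^2)
    calc ∫⁻ x, ENNReal.ofReal (((T x).1 - (T x).2)^2) ∂(gaussianReal 0 1)
        = ∫⁻ x, ENNReal.ofReal ((Real.sqrt v₁ - Real.sqrt v₂)^2 * x^2
          + (2 * (Real.sqrt v₁ - Real.sqrt v₂) * (m₁ - m₂)) * x + (m₁ - m₂)^2)
            ∂(gaussianReal 0 1) := by
          congr 1 with x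
          rw [e x]
      _ = ENNReal.ofReal (∫ x, ((Real.sqrt v₁ - Real.sqrt v₂)^2 * x^2
          + (2 * (Real.sqrt v₁ - Real.sqrt v₂) * (m₁ - m₂)) * x + (m₁ - m₂)^2)
            ∂(gaussianReal 0 1)) := by
          rw [ofReal_integral_eq_lintegral_ofReal hint
            (Eventually.of_forall fun x => by simp only [Pi.zero_apply, ← e x]; exact sq_nonneg _)]
      _ = ENNReal.ofReal ((m₁ - m₂)^2 + (Real.sqrt v₁ - Real.sqrt v₂)^2) := by
          rw [integral_poly, add_comm]
end W2aux
end W2auxsec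

theorem stmt_13 (m₁ m₂ : ℝ) (v₁ v₂ : NNReal) :
    W2 (gaussianReal m₁ v₁) (gaussianReal m₂ v₂) ^ 2 =
      ENNReal.ofReal (|m₁ - m₂| ^ 2 + |Real.sqrt v₁ - Real.sqrt v₂| ^ 2) := by
  have habs : |m₁ - m₂| ^ 2 + |Real.sqrt v₁ - Real.sqrt v₂| ^ 2
      = (m₁ - m₂) ^ 2 + (Real.sqrt v₁ - Real.sqrt v₂) ^ 2 := by
    rw [sq_abs, sq_abs]
  set B := ENNReal.ofReal ((m₁ - m₂) ^ 2 + (Real.sqrt v₁ - Real.sqrt v₂) ^ 2) with hB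
  have hW : W2 (gaussianReal m₁ v₁) (gaussianReal m₂ v₂) = B ^ (1 / 2 : ℝ) := by
    apply le_antisymm
    · obtain ⟨γ, hγ1, hγ2, hγv⟩ := W2aux.ub m₁ m₂ v₁ v₂
      have := iInf₂_le (f := fun (γ : Measure (ℝ × ℝ)) (_ : γ ∈ {γ : Measure (ℝ × ℝ) |
          γ.map Prod.fst = gaussianReal m₁ v₁ ∧ γ.map Prod.snd = gaussianReal m₂ v₂})
          => (∫⁻ p : ℝ × ℝ, ENNReal.ofReal ((p.1 - p.2) ^ 2) ∂γ) ^ (1 / 2 : ℝ))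
        γ ⟨hγ1, hγ2⟩
      rw [hγv] at this
      exact this
    · refine le_iInf₂ fun γ hγ => ?_
      exact ENNReal.rpow_le_rpow (W2aux.lb m₁ m₂ v₁ v₂ γ hγ.1 hγ.2) (by norm_num)
  rw [hW, habs, ← hB]
  rw [← ENNReal.rpow_natCast (B ^ (1/2:ℝ)) 2, ← ENNReal.rpow_mul]
  norm_num
end
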